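/- Let G be a connected (simple) graph on n vertices with at least n edges. Then for every vertex v of G, either there exists a path of length 3 in G starting at v, or there exists a triangle in G containing v. -/

import Mathlib

/-- Base case `r = 2`: in a connected simple graph on `n` vertices with at least `n`
edges, every vertex `v` either starts a path of length 3 (four distinct vertices with
consecutive ones adjacent) or lies in a triangle. -/
theorem graph_path_or_triangle_from_every_vertex (V : Type*) [Fintype V]
    (G : SimpleGraph V) [DecidableRel G.Adj]
    (hconn : G.Connected)
    (hcard : G.edgeFinset.card ≥ Fintype.card V) :
    ∀ v : V,
      (∃ u₁ u₂ u₃ : V, G.Adj v u₁ ∧ G.Adj u₁ u₂ ∧ G.Adj u₂ u₃ ∧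
        v ≠ u₁ ∧ v ≠ u₂ ∧ v ≠ u₃ ∧ u₁ ≠ u₂ ∧ u₁ ≠ u₃ ∧ u₂ ≠ u₃) ∨
      (∃ a b : V, G.Adj v a ∧ G.Adj v b ∧ G.Adj a b) := by
  classical
  intro v
  by_contra hcon
  push_neg at hcon
  obtain ⟨hP, hT⟩ := hcon
  -- convenient form of the no-path hypothesis
  have no3 : ∀ u₁ u₂ u₃ : V, G.Adj v u₁ → G.Adj u₁ u₂ → G.Adj u₂ u₃ →
      v ≠ u₁ → v ≠ u₂ → v ≠ u₃ → u₁ ≠ u₂ → u₁ ≠ u₃ → u₂ ≠ u₃ → False := by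
    intro u₁ u₂ u₃ h1 h2 h3 n1 n2 n3 n4 n5 n6
    exact n6 (hP u₁ u₂ u₃ h1 h2 h3 n1 n2 n3 n4 n5)
  -- every vertex has distance at most 2 from v
  have hd2 : ∀ x : V, G.dist v x ≤ 2 := by
    intro x
    by_contra hx
    push_neg at hx
    obtain ⟨p, hp, hl⟩ := hconn.exists_path_of_dist v x
    have h3 : 3 ≤ p.length := by omega
    cases p with
    | nil => simp at h3
    | cons h1 q =>
      cases q with
      | nil => simp at h3
      | cons h2 r =>
        cases r with
        | nil => simp [SimpleGraph.Walk.length_cons] at h3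
        | cons h3' s =>
          rename_i a b c
          have hnd := hp.support_nodup
          rw [SimpleGraph.Walk.support_cons, SimpleGraph.Walk.support_cons,
            SimpleGraph.Walk.support_cons, s.support_eq_cons] at hnd
          simp only [List.nodup_cons, List.mem_cons] at hnd
          exact no3 a b c h1 h2 h3'
            (fun h => hnd.1 (Or.inl h))
            (fun h => hnd.1 (Or.inr (Or.inl h)))
            (fun h => hnd.1 (Or.inr (Or.inr (Or.inl h))))
            (fun h => hnd.2.1 (Or.inl h))
            (fun h => hnd.2.1 (Or.inr (Or.inl h)))
            (fun h => hnd.2.2.1 (Or.inl h))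
  -- existence of a neighbor one step closer to v
  have hex : ∀ b : V, b ≠ v → ∃ a : V, G.Adj b a ∧ G.dist v a + 1 = G.dist v b := by
    intro b hb
    obtain ⟨p, hl⟩ := hconn.exists_walk_length_eq_dist v b
    have hpos : 0 < G.dist v b := hconn.pos_dist_of_ne (Ne.symm hb)
    cases hq : p.reverse with
    | nil => exact (hb rfl).elim
    | cons h q =>
      rename_i a
      refine ⟨a, h, ?_⟩
      have hlen : q.length + 1 = G.dist v b := by
        have h' := congrArg SimpleGraph.Walk.length hq
        rw [SimpleGraph.Walk.length_reverse, hl, SimpleGraph.Walk.length_cons] at h'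
        omega
      have h1 : G.dist v a ≤ q.length := by
        rw [SimpleGraph.dist_comm]
        exact SimpleGraph.dist_le q
      have h2 : G.dist v b ≤ G.dist v a + 1 := by
        have ht := hconn.dist_triangle (u := v) (v := a) (w := b)
        have hab : G.dist a b = 1 := SimpleGraph.dist_eq_one_iff_adj.mpr h.symm
        omega
      omega
  -- no edge joins two vertices at equal distance from v
  have hne : ∀ a b : V, G.Adj a b → G.dist v a ≠ G.dist v b := by
    intro a b hab heq
    have hda := hd2 a
    have hdb := hd2 b
    rcases Nat.lt_or_ge (G.dist v a) 1 with h0 | h1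
    · -- both 0 : a = v and b = v
      have ha : v = a := hconn.dist_eq_zero_iff.mp (by omega)
      have hb : v = b := hconn.dist_eq_zero_iff.mp (by omega)
      rw [← ha, ← hb] at hab
      exact G.loopless.irrefl v hab
    rcases Nat.lt_or_ge (G.dist v a) 2 with h1' | h2'
    · -- both 1 : triangle
      have hda1 : G.dist v a = 1 := by omega
      have ha : G.Adj v a := SimpleGraph.dist_eq_one_iff_adj.mp hda1
      have hb : G.Adj v b := SimpleGraph.dist_eq_one_iff_adj.mp (by omega)
      exact hT a b ha hb hab
    · -- both 2 : path of length 3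
      have hda2 : G.dist v a = 2 := by omega
      have hav : a ≠ v := by
        intro h; rw [h, SimpleGraph.dist_self] at hda2; omega
      obtain ⟨x, hax, hx⟩ := hex a hav
      have hx1 : G.dist v x = 1 := by omega
      have hvx : G.Adj v x := SimpleGraph.dist_eq_one_iff_adj.mp hx1
      refine no3 x a b hvx hax.symm hab hvx.ne ?_ ?_ ?_ ?_ hab.ne
      · intro h; rw [← h, SimpleGraph.dist_self] at hda2; omega
      · intro h; rw [← h, SimpleGraph.dist_self] at heq; omega
      · intro h; rw [h] at hx1; omega
      · intro h; rw [h] at hx1; omega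

  -- uniqueness of the closer neighbor
  have huniq : ∀ b a a' : V, G.Adj b a → G.dist v a + 1 = G.dist v b →
      G.Adj b a' → G.dist v a' + 1 = G.dist v b → a = a' := by
    intro b a a' ha hda ha' hda'
    by_contra hne'
    have hdb := hd2 b
    rcases Nat.lt_or_ge (G.dist v b) 2 with hb1 | hb2
    · -- dist v b = 1, so dist v a = dist v a' = 0, a = a' = v
      have h1 : v = a := hconn.dist_eq_zero_iff.mp (by omega)
      have h2 : v = a' := hconn.dist_eq_zero_iff.mp (by omega)
      exact hne' (h1 ▸ h2)
    · -- dist v b = 2, so a, a' are neighbors of v; path v a b a'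
      have hdb2 : G.dist v b = 2 := by omega
      have hva : G.Adj v a := SimpleGraph.dist_eq_one_iff_adj.mp (by omega)
      have hva' : G.Adj v a' := SimpleGraph.dist_eq_one_iff_adj.mp (by omega)
      refine no3 a b a' hva ha.symm ha' hva.ne ?_ hva'.ne ha.ne.symm hne' ha'.ne
      intro h; rw [← h, SimpleGraph.dist_self] at hdb2; omega
  -- the parent function
  let parent : V → V := fun b =>
    if h : ∃ a : V, G.Adj b a ∧ G.dist v a + 1 = G.dist v b then h.choose else v
  -- the surjection from `univ.erase v` onto the edge set
  have hsurj : Set.SurjOn (fun b => s(b, parent b))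
      ↑(Finset.univ.erase v) ↑G.edgeFinset := by
    intro e he
    rw [Finset.mem_coe, SimpleGraph.mem_edgeFinset] at he
    induction e with
    | _ a b =>
      rw [SimpleGraph.mem_edgeSet] at he
      -- wlog dist v a < dist v b
      have key : ∀ a b : V, G.Adj a b → G.dist v a < G.dist v b →
          ∃ x, x ≠ v ∧ s(x, parent x) = s(a, b) := by
        intro a b hab hlt
        have hbv : b ≠ v := by
          intro h; rw [h, SimpleGraph.dist_self] at hlt; omega
        refine ⟨b, hbv, ?_⟩
        have h2 : G.dist v b ≤ G.dist v a + 1 := by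
          have ht := hconn.dist_triangle (u := v) (v := a) (w := b)
          have h1 : G.dist a b = 1 := SimpleGraph.dist_eq_one_iff_adj.mpr hab
          omega
        have hprop : G.Adj b a ∧ G.dist v a + 1 = G.dist v b := ⟨hab.symm, by omega⟩
        have hexb : ∃ x : V, G.Adj b x ∧ G.dist v x + 1 = G.dist v b := ⟨a, hprop⟩
        have hpa : parent b = a := by
          have hch := hexb.choose_spec
          have : parent b = hexb.choose := by simp only [parent, dif_pos hexb]
          rw [this]
          exact (huniq b hexb.choose a hch.1 hch.2 hprop.1 hprop.2)
        rw [hpa, Sym2.eq_swap]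
      have hd := hne a b he
      rcases Nat.lt_or_ge (G.dist v a) (G.dist v b) with hlt | hge
      · obtain ⟨x, hx, hxe⟩ := key a b he hlt
        exact ⟨x, by simp [hx], hxe⟩
      · obtain ⟨x, hx, hxe⟩ := key b a he.symm (by omega)
        exact ⟨x, by simp [hx], hxe.trans Sym2.eq_swap⟩
  have hle : G.edgeFinset.card ≤ (Finset.univ.erase v).card :=
    Finset.card_le_card_of_surjOn _ hsurj
  have hcv : (Finset.univ.erase v).card = Fintype.card V - 1 := by
    rw [Finset.card_erase_of_mem (Finset.mem_univ v), Finset.card_univ]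
  have hpos : 0 < Fintype.card V := Fintype.card_pos_iff.mpr ⟨v⟩
  omega
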